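/- If H is a q-sparse graph on n vertices, then the maximum degree of H is at most max{log₂ n, 2enq}. In particular, if q ≥ (log₂ n)/n, then Δ_H ≤ 2enq. -/

import Mathlib

open SimpleGraph

/-- Number of (unlabeled) copies of `J` in `G`: subgraphs of `G` isomorphic to `J`. -/
noncomputable def copyCount {α β : Type*} (J : SimpleGraph α) (G : SimpleGraph β) : ℕ :=
  Set.ncard {A : G.Subgraph | Nonempty (A.coe ≃g J)}

/-- Expected number of copies of `J` in the Erdős–Rényi random graph `G(n,q)`. -/
noncomputable def expCopies {α : Type*} (n : ℕ) (J : SimpleGraph α) (q : ℝ) : ℝ :=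
  (copyCount J (⊤ : SimpleGraph (Fin n)) : ℝ) * q ^ (Set.ncard J.edgeSet)

/-- `H` is `q`-sparse: every subgraph `I ⊆ H` has `E_q X_I ≥ 1`. -/
def qSparse {n : ℕ} (q : ℝ) (H : SimpleGraph (Fin n)) : Prop :=
  ∀ I : H.Subgraph, 1 ≤ expCopies n I.coe q

section StarAux

variable {n : ℕ} (H : SimpleGraph (Fin n)) [DecidableRel H.Adj] (v : Fin n)

/-- Star subgraph of `⊤` with center `c` and leaf set `L`. -/
def starSub (c : Fin n) (L : Finset (Fin n)) : Subgraph (⊤ : SimpleGraph (Fin n)) where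
  verts := insert c ↑L
  Adj a b := a ≠ b ∧ ((a = c ∧ b ∈ L) ∨ (b = c ∧ a ∈ L))
  adj_sub h := h.1
  edge_vert := by
    rintro a b ⟨-, ⟨rfl, -⟩ | ⟨-, h⟩⟩
    · exact Set.mem_insert _ _
    · exact Set.mem_insert_of_mem _ h
  symm := by
    constructor
    rintro a b ⟨hne, h | h⟩
    · exact ⟨hne.symm, Or.inr h⟩
    · exact ⟨hne.symm, Or.inl h⟩

/-- Star subgraph of `H` centered at `v` with all its neighbors. -/
def starHSub : H.Subgraph where
  verts := insert v (H.neighborSet v)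
  Adj a b := (a = v ∧ H.Adj v b) ∨ (b = v ∧ H.Adj v a)
  adj_sub := by
    rintro a b (⟨rfl, h⟩ | ⟨rfl, h⟩)
    · exact h
    · exact h.symm
  edge_vert := by
    rintro a b (⟨rfl, h⟩ | ⟨rfl, h⟩)
    · exact Set.mem_insert _ _
    · exact Set.mem_insert_of_mem _ h
  symm := by
    constructor
    rintro a b (h | h)
    · exact Or.inr h
    · exact Or.inl h

lemma starHSub_edgeSet : (starHSub H v).edgeSet = (fun w => s(v, w)) '' (H.neighborSet v) := by
  ext e
  induction e using Sym2.ind with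
  | _ a b =>
    simp only [Subgraph.mem_edgeSet, starHSub, Set.mem_image]
    constructor
    · rintro (⟨rfl, h⟩ | ⟨rfl, h⟩)
      · exact ⟨b, h, rfl⟩
      · exact ⟨a, h, Sym2.eq_swap⟩
    · rintro ⟨w, hw, he⟩
      rw [Sym2.eq_iff] at he
      rcases he with ⟨rfl, rfl⟩ | ⟨rfl, rfl⟩
      · exact Or.inl ⟨rfl, hw⟩
      · exact Or.inr ⟨rfl, hw⟩

lemma starHSub_coe_edgeSet_ncard :
    Set.ncard (starHSub H v).coe.edgeSet = H.degree v := by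
  have h1 : Sym2.map (Subtype.val) '' (starHSub H v).coe.edgeSet = (starHSub H v).edgeSet :=
    Subgraph.image_coe_edgeSet_coe _
  have hinj : Function.Injective (Sym2.map (Subtype.val : (starHSub H v).verts → Fin n)) :=
    Sym2.map.injective Subtype.val_injective
  have h2 : Set.ncard (starHSub H v).coe.edgeSet = Set.ncard (starHSub H v).edgeSet := by
    rw [← h1, Set.ncard_image_of_injective _ hinj]
  rw [h2, starHSub_edgeSet]
  have hinj2 : Set.InjOn (fun w => s(v, w)) (H.neighborSet v) := by
    intro w hw w' hw' he
    simp only [Sym2.eq_iff] at he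
    rcases he with ⟨-, h⟩ | ⟨h1', h2'⟩
    · exact h
    · exfalso; exact H.irrefl (h1' ▸ hw')
  rw [Set.ncard_image_of_injOn hinj2]
  simp [← SimpleGraph.card_neighborFinset_eq_degree, neighborFinset_def,
    Set.ncard_eq_toFinset_card']

lemma starHSub_verts_ncard : (starHSub H v).verts.ncard = H.degree v + 1 := by
  have hv : v ∉ H.neighborSet v := by simp
  have : (starHSub H v).verts = insert v (H.neighborSet v) := rfl
  rw [this, Set.ncard_insert_of_notMem hv]
  congr 1
  simp [← SimpleGraph.card_neighborFinset_eq_degree, neighborFinset_def,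
    Set.ncard_eq_toFinset_card']

lemma copy_structure (A : Subgraph (⊤ : SimpleGraph (Fin n)))
    (e : A.coe ≃g (starHSub H v).coe) :
    ∃ c : Fin n, ∃ L : Finset (Fin n), L.card = H.degree v ∧ A = starSub c L := by
  set I := starHSub H v with hI
  have hvmem : v ∈ I.verts := Set.mem_insert _ _
  set vc : ↥I.verts := ⟨v, hvmem⟩ with hvc
  set c0 : ↥A.verts := e.symm vc with hc0
  set c : Fin n := c0.1 with hc
  have hcA : c ∈ A.verts := c0.2
  have hAfin : A.verts.Finite := Set.toFinite _
  set L : Finset (Fin n) := (Set.toFinite (A.verts \ {c})).toFinset with hL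
  have hLcoe : (↑L : Set (Fin n)) = A.verts \ {c} := Set.Finite.coe_toFinset _
  have hmemL : ∀ x, x ∈ L ↔ x ∈ A.verts ∧ x ≠ c := by
    intro x
    rw [← Finset.mem_coe, hLcoe, Set.mem_diff, Set.mem_singleton_iff]
  have hcardverts : A.verts.ncard = H.degree v + 1 := by
    rw [← starHSub_verts_ncard H v]
    have : Nat.card ↥A.verts = Nat.card ↥I.verts := Nat.card_congr e.toEquiv
    simpa [Nat.card_coe_set_eq] using this
  have hLcard : L.card = H.degree v := by
    have : (A.verts \ {c}).ncard = A.verts.ncard - 1 :=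
      Set.ncard_diff_singleton_of_mem hcA
    rw [hL, ← Set.ncard_eq_toFinset_card, this, hcardverts]
    omega
  refine ⟨c, L, hLcard, ?_⟩
  have key : ∀ b', b' ∈ L → A.Adj c b' := by
    intro b' hb'
    obtain ⟨hbA, hbc⟩ := (hmemL b').mp hb'
    set y : ↥I.verts := e ⟨b', hbA⟩ with hy
    have hyv : (y : Fin n) ≠ v := by
      intro hyv
      have : y = vc := Subtype.ext hyv
      have : (⟨b', hbA⟩ : ↥A.verts) = c0 := by
        rw [hc0, ← this, hy, RelIso.symm_apply_apply]
      exact hbc (congrArg Subtype.val this)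
    have hynbr : H.Adj v (y : Fin n) := by
      have := y.2
      rcases this with h | h
      · exact absurd h hyv
      · exact h
    have hIadj : I.coe.Adj vc y := Or.inl ⟨rfl, hynbr⟩
    have : I.coe.Adj (e c0) (e ⟨b', hbA⟩) := by
      rw [hc0, RelIso.apply_symm_apply]
      exact hIadj
    exact e.map_adj_iff.mp this
  have hverts : (starSub c L).verts = A.verts := by
    show insert c ↑L = A.verts
    rw [hLcoe, Set.insert_diff_singleton, Set.insert_eq_self.mpr hcA]
  refine Subgraph.ext hverts.symm ?_
  funext a b
  show A.Adj a b = ((starSub c L).Adj a b)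
  refine propext ?_
  show A.Adj a b ↔ _ ≠ _ ∧ ((a = c ∧ b ∈ L) ∨ (b = c ∧ a ∈ L))
  constructor
  · intro h
    have hne : a ≠ b := h.ne
    have ha : a ∈ A.verts := h.fst_mem
    have hb : b ∈ A.verts := h.snd_mem
    have hcoe : A.coe.Adj ⟨a, ha⟩ ⟨b, hb⟩ := h
    have hIadj : I.coe.Adj (e ⟨a, ha⟩) (e ⟨b, hb⟩) := e.map_adj_iff.mpr hcoe
    have hIadj' : I.Adj ((e ⟨a, ha⟩ : ↥I.verts) : Fin n) ((e ⟨b, hb⟩ : ↥I.verts) : Fin n) :=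
      hIadj
    refine ⟨hne, ?_⟩
    rcases hIadj' with ⟨h1, -⟩ | ⟨h1, -⟩
    · left
      have : e ⟨a, ha⟩ = vc := Subtype.ext h1
      have hac : (⟨a, ha⟩ : ↥A.verts) = c0 := by
        rw [hc0, ← this, RelIso.symm_apply_apply]
      have hac' : a = c := congrArg Subtype.val hac
      exact ⟨hac', (hmemL b).mpr ⟨hb, fun hbc => hne (hac'.trans hbc.symm ▸ rfl)⟩⟩
    · right
      have : e ⟨b, hb⟩ = vc := Subtype.ext h1
      have hbc : (⟨b, hb⟩ : ↥A.verts) = c0 := by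
        rw [hc0, ← this, RelIso.symm_apply_apply]
      have hbc' : b = c := congrArg Subtype.val hbc
      exact ⟨hbc', (hmemL a).mpr ⟨ha, fun hax => hne (hax.trans hbc'.symm)⟩⟩
  · rintro ⟨hne, ⟨rfl, hbL⟩ | ⟨rfl, haL⟩⟩
    · exact key b hbL
    · exact (key a haL).symm

lemma copyCount_star_le :
    copyCount (starHSub H v).coe (⊤ : SimpleGraph (Fin n)) ≤ n * n.choose (H.degree v) := by
  classical
  set d := H.degree v with hd
  set f : Fin n × Finset (Fin n) → Subgraph (⊤ : SimpleGraph (Fin n)) :=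
    fun p => starSub p.1 p.2 with hf
  set T : Finset (Fin n × Finset (Fin n)) := Finset.univ ×ˢ Finset.univ.powersetCard d with hT
  have hsub : {A : Subgraph (⊤ : SimpleGraph (Fin n)) | Nonempty (A.coe ≃g (starHSub H v).coe)}
      ⊆ f '' ↑T := by
    rintro A ⟨e⟩
    obtain ⟨c, L, hLcard, rfl⟩ := copy_structure H v A e
    refine ⟨(c, L), ?_, rfl⟩
    simp only [T, Finset.coe_product, Set.mem_prod, Finset.mem_coe, Finset.mem_univ, true_and]
    exact Finset.mem_powersetCard.mpr ⟨Finset.subset_univ _, hLcard⟩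
  calc _root_.copyCount (starHSub H v).coe (⊤ : SimpleGraph (Fin n))
      ≤ (f '' ↑T).ncard := Set.ncard_le_ncard hsub ((T.finite_toSet).image f)
    _ ≤ ((T : Finset (Fin n × Finset (Fin n))) : Set (Fin n × Finset (Fin n))).ncard :=
        Set.ncard_image_le T.finite_toSet
    _ = T.card := Set.ncard_coe_finset T
    _ = n * n.choose d := by
        simp [T, Finset.card_powersetCard]

end StarAux

/-- If `H` is `q`-sparse on `n` vertices then `Δ_H ≤ max {log₂ n, 2enq}`; in particular,
if `q ≥ log₂ n / n` then `Δ_H ≤ 2enq`. -/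
theorem maxDegree_of_qSparse (n : ℕ) (q : ℝ) (hq0 : 0 ≤ q) (hq1 : q ≤ 1)
    (H : SimpleGraph (Fin n)) [DecidableRel H.Adj] (hH : qSparse q H) :
    (H.maxDegree : ℝ) ≤ max (Real.logb 2 n) (2 * Real.exp 1 * n * q) ∧
      (Real.logb 2 n / n ≤ q → (H.maxDegree : ℝ) ≤ 2 * Real.exp 1 * n * q) := by
  have hrhs2 : (0:ℝ) ≤ 2 * Real.exp 1 * n * q := by positivity
  have main : (H.maxDegree : ℝ) ≤ max (Real.logb 2 n) (2 * Real.exp 1 * n * q) := by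
    rcases Nat.eq_zero_or_pos H.maxDegree with h0 | hdpos
    · rw [h0]
      simp only [Nat.cast_zero]
      exact le_max_of_le_right hrhs2
    have hn : n ≠ 0 := by
      rintro rfl
      have : H.maxDegree = 0 := by
        simp [SimpleGraph.maxDegree]
      omega
    haveI : Nonempty (Fin n) := ⟨⟨0, Nat.pos_of_ne_zero hn⟩⟩
    obtain ⟨v, hv⟩ := H.exists_maximal_degree_vertex
    rw [hv]
    set d := H.degree v with hdv
    have hd1 : 1 ≤ d := by omega
    have hs := hH (starHSub H v)
    rw [expCopies, starHSub_coe_edgeSet_ncard] at hs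
    have hcc := copyCount_star_le H v
    have hqpow : (0:ℝ) ≤ q ^ d := by positivity
    have h2 : (1:ℝ) ≤ (n * n.choose d : ℕ) * q ^ d :=
      le_trans hs (mul_le_mul_of_nonneg_right (Nat.cast_le.mpr hcc) hqpow)
    have h3 : (1:ℝ) ≤ (n : ℝ) * ((n:ℝ) ^ d / (d.factorial:ℝ)) * q ^ d := by
      have hch : ((n.choose d : ℕ) : ℝ) ≤ (n:ℝ) ^ d / (d.factorial:ℝ) := by
        have := Nat.choose_le_pow_div (α := ℝ) d n
        simpa using this
      have : ((n * n.choose d : ℕ) : ℝ) * q ^ d ≤ (n : ℝ) * ((n:ℝ) ^ d / (d.factorial:ℝ)) * q ^ d := by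
        push_cast
        have hn0 : (0:ℝ) ≤ n := by positivity
        exact mul_le_mul_of_nonneg_right
          (mul_le_mul_of_nonneg_left hch hn0) hqpow
      linarith
    -- d^d ≤ e^d * d!
    have hfactpos : (0:ℝ) < (d.factorial:ℝ) := by positivity
    have hfact : ((d:ℝ)) ^ d ≤ Real.exp 1 ^ d * (d.factorial:ℝ) := by
      have hterm : ((d:ℝ)) ^ d / (d.factorial:ℝ) ≤ Real.exp d := by
        have hsum := Real.sum_le_exp_of_nonneg (x := (d:ℝ)) (by positivity) (d + 1)
        have hsingle : ((d:ℝ)) ^ d / (d.factorial:ℝ) ≤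
            ∑ i ∈ Finset.range (d + 1), (d:ℝ) ^ i / (i.factorial:ℝ) := by
          refine Finset.single_le_sum (f := fun i => (d:ℝ) ^ i / (i.factorial:ℝ)) ?_
            (Finset.self_mem_range_succ d)
          intro i _
          positivity
        linarith
      rw [Real.exp_one_pow]
      rw [div_le_iff₀ hfactpos] at hterm
      exact hterm
    by_cases hlog : (d:ℝ) ≤ Real.logb 2 n
    · exact le_max_of_le_left hlog
    push_neg at hlog
    refine le_max_of_le_right ?_
    by_contra hcon
    push_neg at hcon
    have hq : 0 < q := by
      rcases lt_or_eq_of_le hq0 with h | h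
      · exact h
      · exfalso
        rw [← h] at h2
        rw [zero_pow (by omega)] at h2
        simp at h2
        linarith
    have hnpos : (0:ℝ) < n := by
      have : 0 < n := Nat.pos_of_ne_zero hn
      exact_mod_cast this
    have hdpos' : (0:ℝ) < d := by exact_mod_cast hd1
    have hn2 : (n:ℝ) < 2 ^ d := by
      have := (Real.logb_lt_iff_lt_rpow (b := 2) (by norm_num) hnpos).mp hlog
      rwa [Real.rpow_natCast] at this
    -- chain to contradiction
    have e1 : (0:ℝ) < Real.exp 1 := Real.exp_pos 1
    have hnq : (0:ℝ) < n * q := by positivity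
    have c1 : (n : ℝ) * ((n:ℝ) ^ d / (d.factorial:ℝ)) * q ^ d = (n:ℝ) * (((n:ℝ) * q) ^ d / (d.factorial:ℝ)) := by
      rw [mul_pow]; ring
    have c2 : (n:ℝ) * (((n:ℝ) * q) ^ d / (d.factorial:ℝ)) < 2 ^ d * (((n:ℝ) * q) ^ d / (d.factorial:ℝ)) := by
      have hpos : (0:ℝ) < ((n:ℝ) * q) ^ d / (d.factorial:ℝ) := by positivity
      exact mul_lt_mul_of_pos_right hn2 hpos
    have c3 : (2:ℝ) ^ d * (((n:ℝ) * q) ^ d / (d.factorial:ℝ)) = (2 * ((n:ℝ) * q)) ^ d / (d.factorial:ℝ) := by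
      rw [mul_pow]; ring
    have c4 : (2 * ((n:ℝ) * q)) ^ d / (d.factorial:ℝ) ≤ (2 * Real.exp 1 * (n:ℝ) * q / d) ^ d := by
      have hB : (0:ℝ) ≤ (2 * ((n:ℝ) * q)) ^ d := by positivity
      have hdd : (0:ℝ) < (d:ℝ) ^ d := by positivity
      have hbase_eq : (2 * Real.exp 1 * (n:ℝ) * q) = (2 * ((n:ℝ) * q)) * Real.exp 1 := by ring
      have hx : (2 * Real.exp 1 * (n:ℝ) * q / (d:ℝ)) ^ d
          = (2 * ((n:ℝ) * q)) ^ d * Real.exp 1 ^ d / (d:ℝ) ^ d := by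
        rw [div_pow, hbase_eq, mul_pow]
      rw [hx, div_le_div_iff₀ hfactpos hdd]
      calc (2 * ((n:ℝ) * q)) ^ d * (d:ℝ) ^ d
          ≤ (2 * ((n:ℝ) * q)) ^ d * (Real.exp 1 ^ d * (d.factorial:ℝ)) :=
            mul_le_mul_of_nonneg_left hfact hB
        _ = (2 * ((n:ℝ) * q)) ^ d * Real.exp 1 ^ d * (d.factorial:ℝ) := by ring
    have c5 : (2 * Real.exp 1 * (n:ℝ) * q / d) ^ d < 1 := by
      have hb0 : (0:ℝ) ≤ 2 * Real.exp 1 * (n:ℝ) * q / d := by positivity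
      have hb1 : 2 * Real.exp 1 * (n:ℝ) * q / d < 1 := (div_lt_one hdpos').mpr hcon
      exact pow_lt_one₀ hb0 hb1 (by omega)
    rw [c1] at h3
    linarith
  refine ⟨main, fun hq' => ?_⟩
  rcases Nat.eq_zero_or_pos n with rfl | hn
  · refine le_trans main ?_
    simp [Real.logb]
  have hnpos : (0:ℝ) < n := by exact_mod_cast hn
  have hlog_le : Real.logb 2 n ≤ 2 * Real.exp 1 * n * q := by
    have h1 : Real.logb 2 n ≤ n * q := by
      have := mul_le_mul_of_nonneg_left hq' (le_of_lt hnpos)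
      rw [mul_div_cancel₀] at this
      · linarith
      · exact ne_of_gt hnpos
    have h2 : (n:ℝ) * q ≤ 2 * Real.exp 1 * n * q := by
      have h2e : (1:ℝ) ≤ 2 * Real.exp 1 := by
        nlinarith [Real.one_le_exp (by norm_num : (0:ℝ) ≤ 1)]
      nlinarith [mul_nonneg (le_of_lt hnpos) hq0]
    linarith
  calc (H.maxDegree : ℝ) ≤ max (Real.logb 2 n) (2 * Real.exp 1 * n * q) := main
    _ ≤ 2 * Real.exp 1 * n * q := max_le hlog_le (le_refl _)
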